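/- Let H be a finite-dimensional complex Hilbert space, U unitary, Δ, Π orthogonal projections, M = Δ U† Π U Δ, and N ≥ 1 an integer. Then Δ − Δ [(Δ U† (I−Π) U)†]^N (Δ U† (I−Π) U)^N Δ = Δ − (Δ − M)^{2N}. Consequently, if φ is a unit eigenvector of M with eigenvalue λ satisfying Δφ = φ, then φ is an eigenvector of Δ − (Δ − M)^{2N} with eigenvalue 1 − (1−λ)^{2N}. -/
import Mathlib


open Matrix

/-- The operator identity underlying the OR-type repetition procedure, and its
consequence for eigenvectors of `M = Δ U† Π U Δ`. -/
theorem stmt4 {n : ℕ} (U D P : Matrix (Fin n) (Fin n) ℂ)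
    (hU : U ∈ Matrix.unitaryGroup (Fin n) ℂ)
    (hD : D.IsHermitian) (hD2 : D * D = D)
    (hP : P.IsHermitian) (hP2 : P * P = P)
    (N : ℕ) (hN : 1 ≤ N) :
    (D - D * ((D * Uᴴ * (1 - P) * U)ᴴ) ^ N * (D * Uᴴ * (1 - P) * U) ^ N * D
        = D - (D - (D * Uᴴ * P * U * D)) ^ (2 * N)) ∧
      ∀ (μ : ℂ) (φ : Fin n → ℂ), φ ≠ 0 → D.mulVec φ = φ →
        (D * Uᴴ * P * U * D).mulVec φ = μ • φ →
        (D - (D - (D * Uᴴ * P * U * D)) ^ (2 * N)).mulVec φ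
          = (1 - (1 - μ) ^ (2 * N)) • φ := by
  set A := D * Uᴴ * (1 - P) * U with hA
  set M := D * Uᴴ * P * U * D with hM
  have hUU : Uᴴ * U = 1 := by
    have := hU.1
    simpa [Matrix.star_eq_conjTranspose] using this
  have hAD : A * D = D - M := by
    have h1 : A * D = D * Uᴴ * U * D - D * Uᴴ * P * U * D := by
      rw [hA]; noncomm_ring
    rw [h1, hM, mul_assoc D Uᴴ U, hUU, mul_one, hD2]
  have hDfix : D * (D - M) = D - M := by
    rw [← hAD, ← mul_assoc, show D * A = A by rw [hA]; rw [← mul_assoc, ← mul_assoc, ← mul_assoc, hD2]]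
  have hDfixPow : ∀ k : ℕ, D * (D - M) ^ (k + 1) = (D - M) ^ (k + 1) := by
    intro k
    rw [pow_succ', ← mul_assoc, hDfix]
  have key : ∀ k : ℕ, A ^ (k + 1) * D = (D - M) ^ (k + 1) := by
    intro k
    induction k with
    | zero => simpa using hAD
    | succ k ih =>
      have : A ^ (k + 2) * D = A * ((D - M) ^ (k + 1)) := by
        rw [pow_succ', mul_assoc, ih]
      rw [this, ← hDfixPow k, ← mul_assoc,
        show A * D = D - M from hAD, ← pow_succ']
  obtain ⟨N', rfl⟩ : ∃ k, N = k + 1 := ⟨N - 1, (Nat.succ_pred_eq_of_pos hN).symm⟩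
  have hkey := key N'
  have hMherm : (D - M)ᴴ = D - M := by
    rw [hM]
    simp [Matrix.conjTranspose_sub, Matrix.conjTranspose_mul, hD.eq, hP.eq, Matrix.mul_assoc]
  have hmain : D * (Aᴴ) ^ (N' + 1) * A ^ (N' + 1) * D = (D - M) ^ (2 * (N' + 1)) := by
    have h1 : (A ^ (N' + 1) * D)ᴴ = D * Aᴴ ^ (N' + 1) := by
      rw [Matrix.conjTranspose_mul (A ^ (N' + 1)) D, hD.eq, Matrix.conjTranspose_pow]
    have h2 : D * Aᴴ ^ (N' + 1) * A ^ (N' + 1) * D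
        = (A ^ (N' + 1) * D)ᴴ * (A ^ (N' + 1) * D) := by
      rw [h1, mul_assoc]
    rw [h2, hkey, Matrix.conjTranspose_pow, hMherm, ← pow_add, two_mul]
  constructor
  · rw [hmain]
  · intro μ φ hφ hDφ hMφ
    have hstep : (D - M).mulVec φ = (1 - μ) • φ := by
      rw [Matrix.sub_mulVec, hDφ, hMφ, sub_smul, one_smul]
    have hpow : ∀ k : ℕ, ((D - M) ^ k).mulVec φ = (1 - μ) ^ k • φ := by
      intro k
      induction k with
      | zero => simp [Matrix.one_mulVec]
      | succ k ih =>
        rw [pow_succ, ← Matrix.mulVec_mulVec, hstep, Matrix.mulVec_smul, ih,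
          smul_smul, pow_succ, mul_comm]
    rw [Matrix.sub_mulVec, hDφ, hpow, sub_smul, one_smul]
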